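/- Extension of Lemma 4.1 to independent, non-identically distributed observations: let (Ω, 𝓕, P) be a probability space, τ₀ a natural number, and (X_c)_{c ∈ ℕ} a sequence of independent ℕ-valued random variables on Ω such that X_c ≤ τ₀ almost surely for every c, and such that limsup_{c → ∞} P[X_c < τ₀] < 1. Then almost surely there exists c with X_c = τ₀, and the running maximum τ̂_k = max_{c < k} X_c converges almost surely to τ₀ as k → ∞. -/

import Mathlib

open MeasureTheory ProbabilityTheory Filter

/-- Extension of Lemma 4.1 to independent, non-identically distributed observations:
if the `X c` are independent, bounded a.s. by `τ₀`, and
`limsup_c P[X c < τ₀] < 1`, then a.s. some observation equals `τ₀` and the running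
maximum converges a.s. to `τ₀`. -/
theorem running_max_consistent_inid {Ω : Type*} [MeasurableSpace Ω]
    (P : Measure Ω) [IsProbabilityMeasure P] (τ₀ : ℕ) (X : ℕ → Ω → ℕ)
    (hmeas : ∀ c, Measurable (X c))
    (hindep : iIndepFun X P)
    (hbound : ∀ c, ∀ᵐ ω ∂P, X c ω ≤ τ₀)
    (hlimsup : Filter.limsup (fun c => P {ω | X c ω < τ₀}) atTop < 1) :
    ∀ᵐ ω ∂P, (∃ c, X c ω = τ₀) ∧
      Tendsto (fun k => (Finset.range k).sup (fun c => X c ω)) atTop (nhds τ₀) := by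
  set s : ℕ → Set Ω := fun c => X c ⁻¹' {τ₀} with hs_def
  have hsm : ∀ c, MeasurableSet (s c) := fun c => (hmeas c) (measurableSet_singleton τ₀)
  -- independence of the events
  have hIndepSet : iIndepSet s P := by
    rw [iIndepSet_iff_meas_biInter hsm]
    intro S
    exact hindep.measure_inter_preimage_eq_mul S
      (fun _ _ => measurableSet_singleton τ₀)
  -- measure of each event
  have hmeas_lt : ∀ c, MeasurableSet {ω | X c ω < τ₀} := fun c =>
    (hmeas c) measurableSet_Iio
  have hcompl : ∀ c, P (s c) = 1 - P {ω | X c ω < τ₀} := by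
    intro c
    have h1 : P ({ω | X c ω < τ₀} ∪ s c) = 1 := by
      rw [← measure_univ (μ := P)]
      refine measure_congr (Filter.eventuallyEq_set.mpr ?_)
      filter_upwards [hbound c] with ω hω
      simp only [Set.mem_union, Set.mem_setOf_eq, hs_def, Set.mem_preimage,
        Set.mem_singleton_iff, Set.mem_univ, iff_true]
      omega
    have hdisj : Disjoint {ω | X c ω < τ₀} (s c) := by
      rw [Set.disjoint_left]
      intro ω h1 h2
      simp only [Set.mem_setOf_eq] at h1
      simp only [hs_def, Set.mem_preimage, Set.mem_singleton_iff] at h2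
      omega
    rw [measure_union hdisj (hsm c)] at h1
    rw [← h1, ENNReal.add_sub_cancel_left (measure_ne_top _ _)]
  -- choose a with limsup < a < 1
  obtain ⟨a, ha1, ha2⟩ := exists_between hlimsup
  obtain ⟨N, hN⟩ := (Filter.eventually_atTop).mp
    (Filter.eventually_lt_of_limsup_lt ha1)
  have hlb : ∀ c, N ≤ c → 1 - a ≤ P (s c) := by
    intro c hc
    rw [hcompl c]
    exact tsub_le_tsub_left (le_of_lt (hN c hc)) 1
  -- divergence of the series
  have htsum : (∑' c, P (s c)) = ⊤ := by
    have h1 : (∑' (c : ℕ), P (s (c + N))) ≤ ∑' c, P (s c) :=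
      ENNReal.tsum_comp_le_tsum_of_injective (add_left_injective N) _
    have h2 : (∑' (_ : ℕ), (1 - a)) ≤ ∑' (c : ℕ), P (s (c + N)) :=
      ENNReal.tsum_le_tsum (fun c => hlb _ (Nat.le_add_left N c))
    have h3 : (∑' (_ : ℕ), (1 - a)) = ⊤ :=
      ENNReal.tsum_const_eq_top_of_ne_zero (by
        simp only [ne_eq, tsub_eq_zero_iff_le, not_le]; exact ha2)
    exact top_le_iff.mp (h3 ▸ h2.trans h1)
  -- second Borel-Cantelli
  have hBC : P (limsup s atTop) = 1 := measure_limsup_eq_one hsm hIndepSet htsum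
  have hae_limsup : ∀ᵐ ω ∂P, ω ∈ limsup s atTop := by
    have hm : MeasurableSet (limsup s atTop) := MeasurableSet.measurableSet_limsup hsm
    rw [ae_iff]
    have : {ω | ¬ ω ∈ limsup s atTop} = (limsup s atTop)ᶜ := rfl
    rw [this, prob_compl_eq_zero_iff hm]
    exact hBC
  have hae_bound : ∀ᵐ ω ∂P, ∀ c, X c ω ≤ τ₀ := ae_all_iff.mpr hbound
  filter_upwards [hae_limsup, hae_bound] with ω hω hb
  have hfreq : ∃ᶠ c in atTop, X c ω = τ₀ := by
    have := (Filter.mem_limsup_iff_frequently_mem).mp hω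
    exact this.mono fun c hc => hc
  obtain ⟨c₀, hc₀⟩ := hfreq.exists
  refine ⟨⟨c₀, hc₀⟩, ?_⟩
  have hev : ∀ᶠ k in atTop, (Finset.range k).sup (fun c => X c ω) = τ₀ := by
    filter_upwards [Filter.eventually_ge_atTop (c₀ + 1)] with k hk
    apply le_antisymm
    · exact Finset.sup_le fun c _ => hb c
    · calc τ₀ = X c₀ ω := hc₀.symm
        _ ≤ (Finset.range k).sup (fun c => X c ω) :=
          Finset.le_sup (f := fun c => X c ω) (Finset.mem_range.mpr hk)
  exact Tendsto.congr' (hev.mono fun k hk => hk.symm) tendsto_const_nhds
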